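/- Let A be an n×n real matrix, let i ≠ j be indices, and suppose there exists z ∈ ker Aᵀ with z_i = 0 and z_j ≠ 0. Then ker A = F_{i,j}(A)^⊥. -/

import Mathlib

open Matrix

/-- `𝒜_{n,d}`: 0/1 matrices with exactly `d` ones in every row and column. -/
def IsRegAdj (n d : ℕ) (A : Matrix (Fin n) (Fin n) ℝ) : Prop :=
  (∀ i j, A i j = 0 ∨ A i j = 1) ∧
  (∀ i, {j : Fin n | A i j = 1}.ncard = d) ∧
  (∀ j, {i : Fin n | A i j = 1}.ncard = d)

/-- A simple switching can be performed in `(i, j, k, l)`. -/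
def CanSwitch {n : ℕ} (A : Matrix (Fin n) (Fin n) ℝ) (i j k l : Fin n) : Prop :=
  A i k = 1 ∧ A j l = 1 ∧ A i l = 0 ∧ A j k = 0

/-- The matrix obtained from `A` by the simple switching in `(i, j, k, l)`. -/
def switch {n : ℕ} (A : Matrix (Fin n) (Fin n) ℝ) (i j k l : Fin n) :
    Matrix (Fin n) (Fin n) ℝ :=
  Matrix.of fun s t =>
    if (s = i ∧ t = k) ∨ (s = j ∧ t = l) then 0
    else if (s = i ∧ t = l) ∨ (s = j ∧ t = k) then 1
    else A s t

/-- `F_{i,j}(A)`: the span of the rows of `A` other than the `i`-th and the `j`-th,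
together with `R_i + R_j`. -/
def rowSpanF {n : ℕ} (A : Matrix (Fin n) (Fin n) ℝ) (i j : Fin n) :
    Submodule ℝ (Fin n → ℝ) :=
  Submodule.span ℝ (insert (A i + A j) {r : Fin n → ℝ | ∃ s, s ≠ i ∧ s ≠ j ∧ r = A s})

/-- Orthogonal complement w.r.t. the standard inner product on `ℝⁿ`. -/
def perp {n : ℕ} (F : Submodule ℝ (Fin n → ℝ)) : Submodule ℝ (Fin n → ℝ) where
  carrier := {x | ∀ v ∈ F, v ⬝ᵥ x = 0}
  zero_mem' := by intro v hv; simp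
  add_mem' := by intro a b ha hb v hv; simp [dotProduct_add, ha v hv, hb v hv]
  smul_mem' := by intro c x hx v hv; simp [dotProduct_smul, hx v hv]

/-- `A` is `β`-delocalized: no level set of a nonzero null vector (of `A` or `Aᵀ`)
has more than `β` coordinates. -/
def Delocalized {n : ℕ} (β : ℝ) (A : Matrix (Fin n) (Fin n) ℝ) : Prop :=
  ∀ x : Fin n → ℝ, x ≠ 0 →
    (x ∈ LinearMap.ker A.mulVecLin ∨ x ∈ LinearMap.ker Aᵀ.mulVecLin) →
    ∀ lam : ℝ, ({i : Fin n | x i = lam}.ncard : ℝ) ≤ β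

/-- if some `z ∈ ker Aᵀ` has `z_i = 0` and `z_j ≠ 0`, then
`ker A = F_{i,j}(A)^⊥`. -/
theorem stmt_16 (n : ℕ) (A : Matrix (Fin n) (Fin n) ℝ) (i j : Fin n) (hij : i ≠ j)
    (z : Fin n → ℝ) (hz : z ∈ LinearMap.ker Aᵀ.mulVecLin) (hzi : z i = 0)
    (hzj : z j ≠ 0) :
    LinearMap.ker A.mulVecLin = perp (rowSpanF A i j) := by
  ext x
  simp only [LinearMap.mem_ker, Matrix.mulVecLin_apply] at *
  have hzcol : ∀ t, ∑ s, A s t * z s = 0 := by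
    intro t
    have := congrFun hz t
    simpa [Matrix.mulVec, dotProduct, Matrix.transpose_apply] using this
  constructor
  · intro hx v hv
    have hrow : ∀ s, A s ⬝ᵥ x = 0 := fun s => congrFun hx s
    induction hv using Submodule.span_induction with
    | mem v hv =>
      rcases hv with rfl | ⟨s, _, _, rfl⟩
      · simp [add_dotProduct, hrow]
      · exact hrow s
    | zero => simp
    | add a b _ _ ha hb => simp [add_dotProduct, ha, hb]
    | smul c a _ ha => simp [smul_dotProduct, ha]
  · intro hx
    have hs : ∀ s, s ≠ i → s ≠ j → A s ⬝ᵥ x = 0 := fun s h1 h2 =>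
      hx (A s) (Submodule.subset_span (Or.inr ⟨s, h1, h2, rfl⟩))
    have hsum : A i ⬝ᵥ x + A j ⬝ᵥ x = 0 := by
      have := hx (A i + A j) (Submodule.subset_span (Or.inl rfl))
      simpa [add_dotProduct] using this
    have hkey : ∑ s, z s * (A s ⬝ᵥ x) = 0 := by
      calc ∑ s, z s * (A s ⬝ᵥ x) = ∑ s, ∑ t, (A s t * z s) * x t := by
            simp only [dotProduct, Finset.mul_sum]
            exact Finset.sum_congr rfl fun s _ => Finset.sum_congr rfl fun t _ => by ring
        _ = ∑ t, (∑ s, A s t * z s) * x t := by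
            rw [Finset.sum_comm]
            exact Finset.sum_congr rfl fun t _ => by rw [Finset.sum_mul]
        _ = 0 := by simp [hzcol]
    have hj' : z j * (A j ⬝ᵥ x) = 0 := by
      rw [← hkey]
      symm
      refine Finset.sum_eq_single j ?_ ?_
      · intro s _ hsj
        by_cases hsi : s = i
        · subst hsi; simp [hzi]
        · simp [hs s hsi hsj]
      · intro h; exact absurd (Finset.mem_univ j) h
    have hAj : A j ⬝ᵥ x = 0 := by
      rcases mul_eq_zero.mp hj' with h | h
      · exact absurd h hzj
      · exact h
    have hAi : A i ⬝ᵥ x = 0 := by linarith [hsum]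
    funext s
    show A s ⬝ᵥ x = 0
    by_cases h1 : s = i
    · subst h1; exact hAi
    by_cases h2 : s = j
    · subst h2; exact hAj
    exact hs s h1 h2
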